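/- arXiv:2008.04566 — 2 statements merged into one kernel-verified Lean document; each statement's English description precedes it below -/
import Mathlib

section
/- Let α ∈ ℝ^{e×d} (e ≥ d ≥ 1) be a non-degenerate coefficient matrix and O the associated optimization map. For any two constraint matrices m and m', the intersection P^α_m ∩ P^α_{m'} is nonempty if and only if P^α_{O(m∩m')} is nonempty; moreover, when nonempty, P^α_m ∩ P^α_{m'} = P^α_{O(m∩m')}. -/
open Set

/-- A constraint matrix: a pair of vectors of lower and upper bounds in `ℝ^e`. -/
abbrev CM (e : ℕ) := (Fin e → ℝ) × (Fin e → ℝ)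

/-- The open polytope `P^α_m` associated with a coefficient matrix `α` and a
constraint matrix `m`. -/
def PolySet {e d : ℕ} (α : Matrix (Fin e) (Fin d) ℝ) (m : CM e) : Set (Fin d → ℝ) :=
  {x | ∀ i, m.1 i < α.mulVec x i ∧ α.mulVec x i < m.2 i}

/-- A coefficient matrix is non-degenerate if its rows are nonzero and
pairwise non-proportional. -/
def Nondeg {e d : ℕ} (α : Matrix (Fin e) (Fin d) ℝ) : Prop :=
  (∀ i, α i ≠ 0) ∧ ∀ i j : Fin e, i ≠ j → ∀ c : ℝ, α i ≠ c • α j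

/-- The set `Λ_i`: vectors `λ ∈ ℝ^e` supported on some `S` with `|S| ≤ d` which are
the unique solution of `λᵀ α = α_i` with support in `S`. -/
def Lambda {e d : ℕ} (α : Matrix (Fin e) (Fin d) ℝ) (i : Fin e) : Set (Fin e → ℝ) :=
  {l | ∃ S : Finset (Fin e), S.card ≤ d ∧ (∀ k ∉ S, l k = 0) ∧
        (∀ j, ∑ k, l k * α k j = α i j) ∧
        ∀ l' : Fin e → ℝ, (∀ k ∉ S, l' k = 0) → (∀ j, ∑ k, l' k * α k j = α i j) → l' = l}

/-- `e̲_k(a,m)` -/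
noncomputable def eLow {e : ℕ} (a : ℝ) (m : CM e) (k : Fin e) : ℝ :=
  if 0 ≤ a then m.1 k else m.2 k

/-- `ē_k(a,m)` -/
noncomputable def eHigh {e : ℕ} (a : ℝ) (m : CM e) (k : Fin e) : ℝ :=
  if 0 ≤ a then m.2 k else m.1 k

/-- The optimized constraint matrix `O(m)`. -/
noncomputable def Opt {e d : ℕ} (α : Matrix (Fin e) (Fin d) ℝ) (m : CM e) : CM e :=
  (fun i => sSup ((fun l : Fin e → ℝ => ∑ k, l k * eLow (l k) m k) '' Lambda α i),
   fun i => sInf ((fun l : Fin e → ℝ => ∑ k, l k * eHigh (l k) m k) '' Lambda α i))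

/-- Intersection constraint matrix `m ∩ m'`. -/
def interCM {e : ℕ} (m m' : CM e) : CM e :=
  (fun i => max (m.1 i) (m'.1 i), fun i => min (m.2 i) (m'.2 i))

/-- Constraint-matrix inclusion `m ⊂ m'`. -/
def cmSub {e : ℕ} (m m' : CM e) : Prop := ∀ i, m'.1 i ≤ m.1 i ∧ m.2 i ≤ m'.2 i

/-- `Λ_i` is a finite set. -/
lemma lambda_finite {e d : ℕ} (α : Matrix (Fin e) (Fin d) ℝ) (i : Fin e) :
    (Lambda α i).Finite := by
  have h : Lambda α i ⊆ ⋃ S : Finset (Fin e),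
      {l : Fin e → ℝ | (∀ k ∉ S, l k = 0) ∧ (∀ j, ∑ k, l k * α k j = α i j) ∧
        ∀ l' : Fin e → ℝ, (∀ k ∉ S, l' k = 0) → (∀ j, ∑ k, l' k * α k j = α i j) → l' = l} := by
    rintro l ⟨S, _, h0, hs, hu⟩
    exact Set.mem_iUnion.2 ⟨S, h0, hs, hu⟩
  refine Set.Finite.subset (Set.finite_iUnion fun S => ?_) h
  apply Set.Subsingleton.finite
  rintro l1 ⟨h10, h1s, h1u⟩ l2 ⟨h20, h2s, _⟩
  exact (h1u l2 h20 h2s).symm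

/-- The indicator of `i` belongs to `Λ_i`. -/
lemma delta_mem_lambda {e d : ℕ} (hd : 1 ≤ d) {α : Matrix (Fin e) (Fin d) ℝ}
    (hα : ∀ i, α i ≠ 0) (i : Fin e) :
    (fun k => if k = i then (1 : ℝ) else 0) ∈ Lambda α i := by
  refine ⟨{i}, by simpa using hd, ?_, ?_, ?_⟩
  · intro k hk
    simp only [Finset.mem_singleton] at hk
    simp [hk]
  · intro j
    rw [Finset.sum_eq_single i (fun b _ hb => by simp [hb]) (by simp)]
    simp
  · intro l' h0 hs
    have h1 : ∀ j, l' i * α i j = α i j := by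
      intro j
      have := hs j
      rwa [Finset.sum_eq_single i
        (fun b _ hb => by rw [h0 b (by simp [hb])]; ring) (by simp)] at this
    have hli : l' i = 1 := by
      by_contra h
      apply hα i
      funext j
      have h2 : (l' i - 1) * α i j = 0 := by have := h1 j; ring_nf; linarith
      rcases mul_eq_zero.1 h2 with h3 | h3
      · exact absurd (by linarith : l' i = 1) h
      · simpa using h3
    funext k
    by_cases hk : k = i
    · simp [hk, hli]
    · simp [hk, h0 k (by simp [hk])]

lemma lambda_ne_zero {e d : ℕ} {α : Matrix (Fin e) (Fin d) ℝ} {i : Fin e}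
    (hi : α i ≠ 0) {l : Fin e → ℝ} (hl : l ∈ Lambda α i) : l ≠ 0 := by
  rintro rfl
  obtain ⟨S, _, _, hs, _⟩ := hl
  apply hi
  funext j
  have := hs j
  simpa using this.symm

lemma sum_mul_mulVec {e d : ℕ} (α : Matrix (Fin e) (Fin d) ℝ) (i : Fin e)
    (l : Fin e → ℝ) (hs : ∀ j, ∑ k, l k * α k j = α i j) (x : Fin d → ℝ) :
    ∑ k, l k * α.mulVec x k = α.mulVec x i := by
  simp only [Matrix.mulVec, dotProduct]
  calc ∑ k, l k * ∑ j, α k j * x j = ∑ k, ∑ j, l k * α k j * x j := by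
        congr 1; funext k; rw [Finset.mul_sum]; congr 1; funext j; ring
    _ = ∑ j, ∑ k, l k * α k j * x j := Finset.sum_comm
    _ = ∑ j, (∑ k, l k * α k j) * x j := by
        congr 1; funext j; rw [Finset.sum_mul]
    _ = ∑ j, α i j * x j := by
        congr 1; funext j; rw [hs j]

/-- Main lemma: `P_m = P_{O(m)}`. -/
lemma poly_eq_opt {e d : ℕ} (hd : 1 ≤ d) (α : Matrix (Fin e) (Fin d) ℝ)
    (hα : ∀ i, α i ≠ 0) (m : CM e) : PolySet α m = PolySet α (Opt α m) := by
  have hdelta : ∀ i : Fin e, (fun k => if k = i then (1 : ℝ) else 0) ∈ Lambda α i :=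
    delta_mem_lambda hd hα
  have hdelL : ∀ i : Fin e,
      ∑ k, (if k = i then (1:ℝ) else 0) * eLow (if k = i then (1:ℝ) else 0) m k = m.1 i := by
    intro i
    rw [Finset.sum_eq_single i (fun b _ hb => by simp [hb]) (by simp)]
    simp [eLow]
  have hdelH : ∀ i : Fin e,
      ∑ k, (if k = i then (1:ℝ) else 0) * eHigh (if k = i then (1:ℝ) else 0) m k = m.2 i := by
    intro i
    rw [Finset.sum_eq_single i (fun b _ hb => by simp [hb]) (by simp)]
    simp [eHigh]
  ext x
  constructor
  · -- P_m ⊆ P_{O(m)}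
    intro hx i
    have hTLfin : ((fun l : Fin e → ℝ => ∑ k, l k * eLow (l k) m k) '' Lambda α i).Finite :=
      (lambda_finite α i).image _
    have hTHfin : ((fun l : Fin e → ℝ => ∑ k, l k * eHigh (l k) m k) '' Lambda α i).Finite :=
      (lambda_finite α i).image _
    have hTLne : ((fun l : Fin e → ℝ => ∑ k, l k * eLow (l k) m k) '' Lambda α i).Nonempty :=
      ⟨_, Set.mem_image_of_mem _ (hdelta i)⟩
    have hTHne : ((fun l : Fin e → ℝ => ∑ k, l k * eHigh (l k) m k) '' Lambda α i).Nonempty :=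
      ⟨_, Set.mem_image_of_mem _ (hdelta i)⟩
    have hlow : ∀ l ∈ Lambda α i, ∑ k, l k * eLow (l k) m k < α.mulVec x i := by
      intro l hl
      obtain ⟨S, _, _, hs, _⟩ := hl
      rw [← sum_mul_mulVec α i l hs x]
      have hne := lambda_ne_zero (hα i) ⟨S, ‹_›, ‹_›, hs, ‹_›⟩
      obtain ⟨k0, hk0⟩ := Function.ne_iff.1 hne
      refine Finset.sum_lt_sum (fun k _ => ?_) ⟨k0, Finset.mem_univ _, ?_⟩
      · rcases lt_trichotomy (l k) 0 with h | h | h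
        · rw [eLow, if_neg (not_le.2 h)]
          exact le_of_lt (mul_lt_mul_of_neg_left (hx k).2 h)
        · simp [h]
        · rw [eLow, if_pos h.le]
          exact le_of_lt (mul_lt_mul_of_pos_left (hx k).1 h)
      · rcases lt_trichotomy (l k0) 0 with h | h | h
        · rw [eLow, if_neg (not_le.2 h)]
          exact mul_lt_mul_of_neg_left (hx k0).2 h
        · exact absurd h hk0
        · rw [eLow, if_pos h.le]
          exact mul_lt_mul_of_pos_left (hx k0).1 h
    have hhigh : ∀ l ∈ Lambda α i, α.mulVec x i < ∑ k, l k * eHigh (l k) m k := by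
      intro l hl
      obtain ⟨S, _, _, hs, _⟩ := hl
      rw [← sum_mul_mulVec α i l hs x]
      have hne := lambda_ne_zero (hα i) ⟨S, ‹_›, ‹_›, hs, ‹_›⟩
      obtain ⟨k0, hk0⟩ := Function.ne_iff.1 hne
      refine Finset.sum_lt_sum (fun k _ => ?_) ⟨k0, Finset.mem_univ _, ?_⟩
      · rcases lt_trichotomy (l k) 0 with h | h | h
        · rw [eHigh, if_neg (not_le.2 h)]
          exact le_of_lt (mul_lt_mul_of_neg_left (hx k).1 h)
        · simp [h]
        · rw [eHigh, if_pos h.le]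
          exact le_of_lt (mul_lt_mul_of_pos_left (hx k).2 h)
      · rcases lt_trichotomy (l k0) 0 with h | h | h
        · rw [eHigh, if_neg (not_le.2 h)]
          exact mul_lt_mul_of_neg_left (hx k0).1 h
        · exact absurd h hk0
        · rw [eHigh, if_pos h.le]
          exact mul_lt_mul_of_pos_left (hx k0).2 h
    constructor
    · show sSup _ < _
      obtain ⟨l, hl, hval⟩ := hTLne.csSup_mem hTLfin
      rw [← hval]
      exact hlow l hl
    · show _ < sInf _
      obtain ⟨l, hl, hval⟩ := hTHne.csInf_mem hTHfin
      rw [← hval]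
      exact hhigh l hl
  · -- P_{O(m)} ⊆ P_m
    intro hx i
    have hTLfin : ((fun l : Fin e → ℝ => ∑ k, l k * eLow (l k) m k) '' Lambda α i).Finite :=
      (lambda_finite α i).image _
    have hTHfin : ((fun l : Fin e → ℝ => ∑ k, l k * eHigh (l k) m k) '' Lambda α i).Finite :=
      (lambda_finite α i).image _
    have h1 : m.1 i ≤ (Opt α m).1 i := by
      have : m.1 i ∈ (fun l : Fin e → ℝ => ∑ k, l k * eLow (l k) m k) '' Lambda α i :=
        ⟨_, hdelta i, hdelL i⟩
      exact le_csSup hTLfin.bddAbove this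
    have h2 : (Opt α m).2 i ≤ m.2 i := by
      have : m.2 i ∈ (fun l : Fin e → ℝ => ∑ k, l k * eHigh (l k) m k) '' Lambda α i :=
        ⟨_, hdelta i, hdelH i⟩
      exact csInf_le hTHfin.bddBelow this
    exact ⟨lt_of_le_of_lt h1 (hx i).1, lt_of_lt_of_le (hx i).2 h2⟩

lemma poly_inter {e d : ℕ} (α : Matrix (Fin e) (Fin d) ℝ) (m m' : CM e) :
    PolySet α m ∩ PolySet α m' = PolySet α (interCM m m') := by
  ext x
  simp only [PolySet, interCM, Set.mem_inter_iff, Set.mem_setOf_eq, max_lt_iff, lt_min_iff]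
  constructor
  · rintro ⟨h1, h2⟩ i
    exact ⟨⟨(h1 i).1, (h2 i).1⟩, (h1 i).2, (h2 i).2⟩
  · intro h
    exact ⟨fun i => ⟨(h i).1.1, (h i).2.1⟩, fun i => ⟨(h i).1.2, (h i).2.2⟩⟩

/-- `P^α_m ∩ P^α_{m'}` is nonempty iff `P^α_{O(m ∩ m')}` is, and then
the two sets coincide. -/
theorem statement_2 {d e : ℕ} (hd : 1 ≤ d) (hde : d ≤ e)
    (α : Matrix (Fin e) (Fin d) ℝ) (hα : Nondeg α) (m m' : CM e) :
    ((PolySet α m ∩ PolySet α m').Nonempty ↔ (PolySet α (Opt α (interCM m m'))).Nonempty) ∧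
    ((PolySet α m ∩ PolySet α m').Nonempty →
      PolySet α m ∩ PolySet α m' = PolySet α (Opt α (interCM m m'))) := by
  have key : PolySet α m ∩ PolySet α m' = PolySet α (Opt α (interCM m m')) := by
    rw [poly_inter, poly_eq_opt hd α hα.1]
  exact ⟨by rw [key], fun _ => key⟩
end

section
/- Let M ⊂ ℝ^d be a bounded polytope partitioned mod 0 into finitely many open convex polytope atoms {A_ω}_{ω∈𝒜}, each given as A_ω = P^α_{m_ω} with m_ω = O(m_ω), for a non-degenerate coefficient matrix α ∈ ℝ^{e×d}. Let F : M → M satisfy F = a·Id + B with a > 1 and B constant equal to B_ω on each atom A_ω. Let q ∈ ℕ, for each k ∈ {1,…,q} a set 𝒜_k ⊆ 𝒜, and for each k and ω ∈ 𝒜_k an index ℓ(k,ω) ∈ {1,…,q}. Then the polytopes {P^α_{m_k}}_{k=1}^q satisfy the conditioning problem (namely: P^α_{m_k} ∩ A_ω ≠ ∅ iff ω ∈ 𝒜_k, and F(P^α_{m_k} ∩ A_ω) ⊆ P^α_{m_{ℓ(k,ω)}} for every nonempty intersection) if and only if: P^α_{O(m_k ∩ m_ω)} ≠ ∅ iff ω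 ∈ 𝒜_k, and for each nonempty P^α_{O(m_k ∩ m_ω)} the constraint matrix a·O(m_k ∩ m_ω) + αB_ω is contained in m_{ℓ(k,ω)} in the sense of constraint-matrix inclusion. -/
open Set

section Reduce

variable {e : ℕ} {E : Type*} [AddCommGroup E] [Module ℝ E]

lemma reduce_aux (v : Fin e → E) :
    ∀ N : ℕ, ∀ lam : Fin e → ℝ, (Finset.univ.filter (lam · ≠ 0)).card < N →
    ∃ lam' : Fin e → ℝ, (∑ k, lam' k • v k = ∑ k, lam k • v k) ∧
      (∀ k, lam' k ≠ 0 → 0 < lam' k * lam k) ∧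
      LinearIndependent ℝ (fun k : {k // lam' k ≠ 0} => v k) := by
  intro N
  induction N with
  | zero => intro lam h; omega
  | succ N ih =>
    intro lam hcard
    by_cases h : LinearIndependent ℝ (fun k : {k // lam k ≠ 0} => v k)
    · exact ⟨lam, rfl, fun k hk => mul_self_pos.2 hk, h⟩
    · obtain ⟨g, hg0, k1, hk1⟩ := Fintype.not_linearIndependent_iff.1 h
      set μ : Fin e → ℝ := fun k => if h : lam k ≠ 0 then g ⟨k, h⟩ else 0 with hμ
      have hμ0 : ∀ k, lam k = 0 → μ k = 0 := by intro k hk; simp [hμ, hk]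
      have hμsum : ∑ k, μ k • v k = 0 := by
        have h1 : ∑ k, μ k • v k
            = ∑ k ∈ Finset.univ.filter (lam · ≠ 0), μ k • v k := by
          refine (Finset.sum_filter_of_ne ?_).symm
          intro k _ hk
          intro h0
          rw [hμ0 k h0, zero_smul] at hk
          exact hk rfl
        rw [h1, Finset.sum_subtype (p := fun k => lam k ≠ 0) _ (by simp) (fun k => μ k • v k), ← hg0]
        refine Finset.sum_congr rfl fun k _ => ?_
        simp only [hμ]
        rw [dif_pos k.2]
      have hk1' : μ k1 ≠ 0 := by simp only [hμ]; rw [dif_pos k1.2]; simpa using hk1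
      -- choose the pivot
      have hKne : (Finset.univ.filter (μ · ≠ 0)).Nonempty :=
        ⟨(k1 : Fin e), by simp [hk1']⟩
      obtain ⟨k0, hk0mem, hk0min⟩ :=
        Finset.exists_min_image _ (fun k => |lam k / μ k|) hKne
      have hμk0 : μ k0 ≠ 0 := by simpa using (Finset.mem_filter.1 hk0mem).2
      set t : ℝ := lam k0 / μ k0 with ht
      set lam'' : Fin e → ℝ := fun k => lam k - t * μ k with hlam''
      have habs : ∀ k, μ k ≠ 0 → |t * μ k| ≤ |lam k| := by
        intro k hk
        have := hk0min k (by simp [hk])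
        rw [abs_mul]
        calc |t| * |μ k| ≤ |lam k / μ k| * |μ k| := by
              apply mul_le_mul_of_nonneg_right _ (abs_nonneg _)
              simpa [ht] using this
          _ = |lam k| := by rw [abs_div]; field_simp
      have hsign : ∀ k, lam'' k ≠ 0 → 0 < lam'' k * lam k := by
        intro k hk
        by_cases hμk : μ k = 0
        · simp only [hlam'', hμk, mul_zero, sub_zero] at hk ⊢
          exact mul_self_pos.2 hk
        · have h1 : t * μ k * lam k ≤ lam k * lam k := by
            calc t * μ k * lam k ≤ |t * μ k * lam k| := le_abs_self _
              _ = |t * μ k| * |lam k| := by rw [abs_mul]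
              _ ≤ |lam k| * |lam k| :=
                  mul_le_mul_of_nonneg_right (habs k hμk) (abs_nonneg _)
              _ = lam k * lam k := abs_mul_abs_self _
          have h2 : 0 ≤ lam'' k * lam k := by
            simp only [hlam'']
            nlinarith
          rcases h2.lt_or_eq with h3 | h3
          · exact h3
          · exfalso
            rcases mul_eq_zero.1 h3.symm with h4 | h4
            · exact hk h4
            · have := habs k hμk
              rw [h4] at this
              simp only [abs_zero] at this
              have h5 : t * μ k = 0 := abs_nonpos_iff.1 this
              simp only [hlam'', h4, h5, sub_zero] at hk
              exact hk rfl
      have hsum'' : ∑ k, lam'' k • v k = ∑ k, lam k • v k := by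
        simp only [hlam'', sub_smul, Finset.sum_sub_distrib, mul_smul]
        rw [← Finset.smul_sum, hμsum, smul_zero, sub_zero]
      -- support decreases
      have hsubset : (Finset.univ.filter (lam'' · ≠ 0))
          ⊂ (Finset.univ.filter (lam · ≠ 0)) := by
        refine Finset.ssubset_iff_of_subset ?_ |>.2 ?_
        · intro k hk
          simp only [Finset.mem_filter, Finset.mem_univ, true_and] at hk ⊢
          intro h0
          exact hk (by simp [hlam'', h0, hμ0 k h0])
        · refine ⟨k0, ?_, ?_⟩
          · have : lam k0 ≠ 0 := by
              by_contra h0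
              exact hμk0 (hμ0 k0 h0)
            simp [this]
          · simp only [Finset.mem_filter, Finset.mem_univ, true_and, not_not]
            simp only [hlam'', ht]
            field_simp
            ring
      have hcard'' : (Finset.univ.filter (lam'' · ≠ 0)).card < N := by
        have := Finset.card_lt_card hsubset
        omega
      obtain ⟨lam', h1, h2, h3⟩ := ih lam'' hcard''
      refine ⟨lam', h1.trans hsum'', fun k hk => ?_, h3⟩
      have ha := h2 k hk
      have hb : lam'' k ≠ 0 := by
        intro h0
        rw [h0, mul_zero] at ha
        exact lt_irrefl _ ha
      have hc := hsign k hb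
      nlinarith [mul_pos ha hc, mul_self_pos.2 hb]

lemma reduce (v : Fin e → E) (lam : Fin e → ℝ) :
    ∃ lam' : Fin e → ℝ, (∑ k, lam' k • v k = ∑ k, lam k • v k) ∧
      (∀ k, lam' k ≠ 0 → 0 < lam' k * lam k) ∧
      LinearIndependent ℝ (fun k : {k // lam' k ≠ 0} => v k) :=
  reduce_aux v _ lam (Nat.lt_succ_self _)

end Reduce
section LambdaFacts

variable {e d : ℕ} {α : Matrix (Fin e) (Fin d) ℝ}

lemma continuous_mulVec_apply (α : Matrix (Fin e) (Fin d) ℝ) (i : Fin e) :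
    Continuous fun x : Fin d → ℝ => α.mulVec x i := by
  simp only [Matrix.mulVec, dotProduct]
  exact continuous_finset_sum _ fun j _ => continuous_const.mul (continuous_apply j)

lemma mulVec_comb {l : Fin e → ℝ} {i : Fin e}
    (hl : ∀ j, ∑ k, l k * α k j = α i j) (x : Fin d → ℝ) :
    α.mulVec x i = ∑ k, l k * α.mulVec x k := by
  simp only [Matrix.mulVec, dotProduct]
  calc ∑ j, α i j * x j = ∑ j, (∑ k, l k * α k j) * x j := by
        refine Finset.sum_congr rfl fun j _ => ?_
        rw [hl j]
    _ = ∑ j, ∑ k, l k * α k j * x j := by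
        refine Finset.sum_congr rfl fun j _ => ?_
        rw [Finset.sum_mul]
    _ = ∑ k, ∑ j, l k * α k j * x j := Finset.sum_comm
    _ = ∑ k, l k * ∑ j, α k j * x j := by
        refine Finset.sum_congr rfl fun k _ => ?_
        rw [Finset.mul_sum]
        refine Finset.sum_congr rfl fun j _ => ?_
        ring

lemma single_mem_Lambda (hd : 1 ≤ d) (hα : Nondeg α) (i : Fin e) :
    (Pi.single i 1 : Fin e → ℝ) ∈ Lambda α i := by
  refine ⟨{i}, by simpa using hd, ?_, ?_, ?_⟩
  · intro k hk
    simp only [Finset.mem_singleton] at hk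
    exact Pi.single_eq_of_ne hk 1
  · intro j
    rw [Finset.sum_eq_single i]
    · simp
    · intro k _ hk
      rw [Pi.single_eq_of_ne hk 1, zero_mul]
    · simp
  · intro l' hl'0 hl'
    have hli : l' i = 1 := by
      have h1 : ∀ j, l' i * α i j = α i j := by
        intro j
        have := hl' j
        rwa [Finset.sum_eq_single i (fun k _ hk => by rw [hl'0 k (by simpa using hk), zero_mul])
          (by simp)] at this
      by_contra hne
      apply hα.1 i
      funext j
      have := h1 j
      have h2 : (l' i - 1) * α i j = 0 := by ring_nf; linarith [h1 j]
      rcases mul_eq_zero.1 h2 with h3 | h3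
      · exact absurd (by linarith) hne
      · exact h3
    funext k
    by_cases hk : k = i
    · subst hk; simp [hli]
    · rw [hl'0 k (by simpa using hk), Pi.single_eq_of_ne hk 1]

lemma Lambda_finite (α : Matrix (Fin e) (Fin d) ℝ) (i : Fin e) : (Lambda α i).Finite := by
  have hinj : Set.InjOn (fun l : Fin e → ℝ => {k | l k ≠ 0}) (Lambda α i) := by
    intro l hl l' hl' hsupp
    obtain ⟨S, _, hS0, hSeq, hSuniq⟩ := hl
    refine (hSuniq l' ?_ ?_).symm
    · intro k hk
      by_contra h0
      have hs : {k | l k ≠ 0} = {k | l' k ≠ 0} := hsupp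
      have hmem : k ∈ {k | l' k ≠ 0} := h0
      rw [← hs] at hmem
      exact hmem (hS0 k hk)
    · exact hl'.choose_spec.2.2.1
  exact Set.Finite.of_finite_image (Set.Finite.subset (Set.finite_univ) (Set.subset_univ _)) hinj

lemma Lambda.exists_ne_zero (hα : Nondeg α) {l : Fin e → ℝ} {i : Fin e}
    (hl : l ∈ Lambda α i) : ∃ k, l k ≠ 0 := by
  by_contra h0
  push_neg at h0
  apply hα.1 i
  funext j
  rw [← hl.choose_spec.2.2.1 j]
  simp [h0]

lemma comb_mem_Icc (hα : Nondeg α) {l : Fin e → ℝ} {i : Fin e} (hl : l ∈ Lambda α i)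
    {n : CM e} {x : Fin d → ℝ} (hx : x ∈ PolySet α n) :
    ∑ k, l k * eLow (l k) n k < α.mulVec x i ∧
      α.mulVec x i < ∑ k, l k * eHigh (l k) n k := by
  obtain ⟨k0, hk0⟩ := Lambda.exists_ne_zero hα hl
  have heq := mulVec_comb hl.choose_spec.2.2.1 x
  constructor
  · rw [heq]
    refine Finset.sum_lt_sum (fun k _ => ?_) ⟨k0, Finset.mem_univ _, ?_⟩
    · rcases lt_trichotomy (l k) 0 with h | h | h
      · rw [eLow, if_neg (not_le.2 h)]
        exact mul_le_mul_of_nonpos_left (hx k).2.le h.le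
      · simp [h]
      · rw [eLow, if_pos h.le]
        exact mul_le_mul_of_nonneg_left (hx k).1.le h.le
    · rcases hk0.lt_or_gt with h | h
      · rw [eLow, if_neg (not_le.2 h)]
        exact (mul_lt_mul_left_of_neg h).2 (hx k0).2
      · rw [eLow, if_pos h.le]
        exact (mul_lt_mul_iff_right₀ h).2 (hx k0).1
  · rw [heq]
    refine Finset.sum_lt_sum (fun k _ => ?_) ⟨k0, Finset.mem_univ _, ?_⟩
    · rcases lt_trichotomy (l k) 0 with h | h | h
      · rw [eHigh, if_neg (not_le.2 h)]
        exact mul_le_mul_of_nonpos_left (hx k).1.le h.le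
      · simp [h]
      · rw [eHigh, if_pos h.le]
        exact mul_le_mul_of_nonneg_left (hx k).2.le h.le
    · rcases hk0.lt_or_gt with h | h
      · rw [eHigh, if_neg (not_le.2 h)]
        exact (mul_lt_mul_left_of_neg h).2 (hx k0).1
      · rw [eHigh, if_pos h.le]
        exact (mul_lt_mul_iff_right₀ h).2 (hx k0).2

end LambdaFacts
section OptFacts

variable {e d : ℕ} {α : Matrix (Fin e) (Fin d) ℝ}

lemma single_eLow_val (n : CM e) (i : Fin e) :
    ∑ k, (Pi.single i 1 : Fin e → ℝ) k * eLow ((Pi.single i 1 : Fin e → ℝ) k) n k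
      = n.1 i := by
  rw [Finset.sum_eq_single i]
  · simp [eLow]
  · intro k _ hk
    rw [Pi.single_eq_of_ne hk 1, zero_mul]
  · simp

lemma single_eHigh_val (n : CM e) (i : Fin e) :
    ∑ k, (Pi.single i 1 : Fin e → ℝ) k * eHigh ((Pi.single i 1 : Fin e → ℝ) k) n k
      = n.2 i := by
  rw [Finset.sum_eq_single i]
  · simp [eHigh]
  · intro k _ hk
    rw [Pi.single_eq_of_ne hk 1, zero_mul]
  · simp

lemma polySet_Opt (hd : 1 ≤ d) (hα : Nondeg α) (n : CM e) :
    PolySet α (Opt α n) = PolySet α n := by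
  ext x
  constructor
  · intro hx i
    have h1 : n.1 i ≤ (Opt α n).1 i := by
      refine le_csSup (((Lambda_finite α i).image _).bddAbove) ?_
      exact ⟨_, single_mem_Lambda hd hα i, single_eLow_val n i⟩
    have h2 : (Opt α n).2 i ≤ n.2 i := by
      refine csInf_le (((Lambda_finite α i).image _).bddBelow) ?_
      exact ⟨_, single_mem_Lambda hd hα i, single_eHigh_val n i⟩
    exact ⟨lt_of_le_of_lt h1 (hx i).1, lt_of_lt_of_le (hx i).2 h2⟩
  · intro hx i
    have h1 : (Opt α n).1 i ∈
        (fun l => ∑ k, l k * eLow (l k) n k) '' Lambda α i :=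
      Set.Nonempty.csSup_mem ⟨_, ⟨_, single_mem_Lambda hd hα i, rfl⟩⟩
        ((Lambda_finite α i).image _)
    have h2 : (Opt α n).2 i ∈
        (fun l => ∑ k, l k * eHigh (l k) n k) '' Lambda α i :=
      Set.Nonempty.csInf_mem ⟨_, ⟨_, single_mem_Lambda hd hα i, rfl⟩⟩
        ((Lambda_finite α i).image _)
    obtain ⟨l1, hl1, hv1⟩ := h1
    obtain ⟨l2, hl2, hv2⟩ := h2
    constructor
    · rw [← hv1]; exact (comb_mem_Icc hα hl1 hx).1
    · rw [← hv2]; exact (comb_mem_Icc hα hl2 hx).2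

lemma polySet_interCM (m m' : CM e) :
    PolySet α (interCM m m') = PolySet α m ∩ PolySet α m' := by
  ext x
  simp only [PolySet, interCM, Set.mem_setOf_eq, Set.mem_inter_iff, max_lt_iff, lt_min_iff]
  exact ⟨fun h => ⟨fun i => ⟨(h i).1.1, (h i).2.1⟩, fun i => ⟨(h i).1.2, (h i).2.2⟩⟩,
    fun h i => ⟨⟨(h.1 i).1, (h.2 i).1⟩, (h.1 i).2, (h.2 i).2⟩⟩

end OptFacts
section MaxLemma

variable {e d : ℕ} {α : Matrix (Fin e) (Fin d) ℝ}

lemma sum_smul_rows_apply (α : Matrix (Fin e) (Fin d) ℝ) (l : Fin e → ℝ) (j : Fin d) :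
    (∑ k, l k • (α k : Fin d → ℝ)) j = ∑ k, l k * α k j := by
  rw [Finset.sum_apply]
  simp

lemma single_smul_rows (α : Matrix (Fin e) (Fin d) ℝ) (k : Fin e) :
    ∑ k', (Pi.single k (1:ℝ) : Fin e → ℝ) k' • (α k' : Fin d → ℝ) = (α k : Fin d → ℝ) := by
  rw [Finset.sum_eq_single k]
  · simp
  · intro b _ hb
    rw [Pi.single_eq_of_ne hb 1, zero_smul]
  · simp

lemma max_lemma (hd : 1 ≤ d) (hα : Nondeg α) (n : CM e) {x0 : Fin d → ℝ}
    (hx0 : x0 ∈ PolySet α n) (hb : Bornology.IsBounded (PolySet α n)) (i : Fin e) :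
    ∃ l ∈ Lambda α i, ∃ x ∈ closure (PolySet α n),
      ∑ k, l k * eHigh (l k) n k = α.mulVec x i := by
  classical
  set P := PolySet α n with hP
  set Q : Set (Fin d → ℝ) := {x | ∀ k, n.1 k ≤ α.mulVec x k ∧ α.mulVec x k ≤ n.2 k} with hQ
  have hPQ : P ⊆ Q := fun x hx k => ⟨(hx k).1.le, (hx k).2.le⟩
  have hQP : Q ⊆ closure P := by
    intro y hy
    have hcont : Continuous fun s : ℝ => y + s • (x0 - y) :=
      continuous_const.add (continuous_id.smul continuous_const)
    have ht : Filter.Tendsto (fun s : ℝ => y + s • (x0 - y))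
        (nhdsWithin 0 (Set.Ioi 0)) (nhds y) := by
      have h0 := hcont.tendsto 0
      simp only [zero_smul, add_zero] at h0
      exact h0.mono_left nhdsWithin_le_nhds
    refine mem_closure_of_tendsto ht ?_
    filter_upwards [Ioc_mem_nhdsGT_of_mem (Set.left_mem_Ico.2 one_pos)] with s hs
    intro k
    have hval : α.mulVec (y + s • (x0 - y)) k
        = α.mulVec y k + s * (α.mulVec x0 k - α.mulVec y k) := by
      rw [Matrix.mulVec_add, Matrix.mulVec_smul, Matrix.mulVec_sub]
      simp [smul_eq_mul]
    rw [hval]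
    constructor
    · nlinarith [(hy k).1, (hx0 k).1, hs.1, hs.2]
    · nlinarith [(hy k).2, (hx0 k).2, hs.1, hs.2]
  have hQclosed : IsClosed Q := by
    have : Q = ⋂ k, ((fun x => α.mulVec x k) ⁻¹' Set.Icc (n.1 k) (n.2 k)) := by
      ext x
      simp [hQ, Set.mem_Icc]
    rw [this]
    exact isClosed_iInter fun k =>
      (isClosed_Icc.preimage (continuous_mulVec_apply α k))
  have hQcpt : IsCompact Q :=
    Metric.isCompact_of_isClosed_isBounded hQclosed ((hb.closure).subset hQP)
  obtain ⟨xs, hxsQ, hmax⟩ := hQcpt.exists_isMaxOn ⟨x0, hPQ hx0⟩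
    ((continuous_mulVec_apply α i).continuousOn)
  set C : Set (Fin d → ℝ) := {y | ∃ lam : Fin e → ℝ,
    (∀ k, (0 < lam k → α.mulVec xs k = n.2 k) ∧ (lam k < 0 → α.mulVec xs k = n.1 k)) ∧
    y = ∑ k, lam k • (α k : Fin d → ℝ)} with hC
  have hC0 : (0 : Fin d → ℝ) ∈ C :=
    ⟨0, fun k => ⟨fun h => absurd h (lt_irrefl 0), fun h => absurd h (lt_irrefl 0)⟩,
      by simp⟩
  have hCsmul : ∀ s : ℝ, 0 < s → ∀ y ∈ C, s • y ∈ C := by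
    rintro s hs y ⟨lam, hok, rfl⟩
    refine ⟨s • lam, fun k => ⟨fun h => ?_, fun h => ?_⟩, ?_⟩
    · refine (hok k).1 ?_
      have : (s • lam) k = s * lam k := rfl
      nlinarith [h, hs]
    · refine (hok k).2 ?_
      have : (s • lam) k = s * lam k := rfl
      nlinarith [h, hs]
    · rw [Finset.smul_sum]
      refine Finset.sum_congr rfl fun k _ => ?_
      rw [smul_smul]
      rfl
  have hCconv : Convex ℝ C := by
    rintro y1 ⟨l1, h1ok, rfl⟩ y2 ⟨l2, h2ok, rfl⟩ a b ha hb _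
    refine ⟨a • l1 + b • l2, fun k => ⟨fun h => ?_, fun h => ?_⟩, ?_⟩
    · have hval : (a • l1 + b • l2) k = a * l1 k + b * l2 k := rfl
      rw [hval] at h
      rcases lt_or_ge 0 (a * l1 k) with h' | h'
      · refine (h1ok k).1 ?_
        nlinarith
      · refine (h2ok k).1 ?_
        nlinarith
    · have hval : (a • l1 + b • l2) k = a * l1 k + b * l2 k := rfl
      rw [hval] at h
      rcases lt_or_ge (a * l1 k) 0 with h' | h'
      · refine (h1ok k).2 ?_
        nlinarith
      · refine (h2ok k).2 ?_
        nlinarith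
    · rw [Finset.smul_sum, Finset.smul_sum, ← Finset.sum_add_distrib]
      refine Finset.sum_congr rfl fun k _ => ?_
      have hval : (a • l1 + b • l2) k = a * l1 k + b * l2 k := rfl
      rw [hval, add_smul, smul_smul, smul_smul]
  have hCclosed : IsClosed C := by
    have hCeq : C = ⋃ (S : Finset (Fin e)),
        ⋃ (_ : LinearIndependent ℝ (fun k : S => (α k : Fin d → ℝ))),
        ((fun c : S → ℝ => ∑ k : S, c k • (α (k : Fin e) : Fin d → ℝ)) ''
          {c : S → ℝ | ∀ k : S, (0 < c k → α.mulVec xs (k : Fin e) = n.2 k) ∧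
            (c k < 0 → α.mulVec xs (k : Fin e) = n.1 k)}) := by
      ext y
      simp only [Set.mem_iUnion, hC, Set.mem_setOf_eq, Set.mem_image]
      constructor
      · rintro ⟨lam, hok, rfl⟩
        obtain ⟨lam', hsum', hsign', hind'⟩ := reduce (fun k => (α k : Fin d → ℝ)) lam
        set S := Finset.univ.filter (lam' · ≠ 0) with hS
        have hmemS : ∀ k : Fin e, k ∈ S ↔ lam' k ≠ 0 := by
          intro k; simp [hS]
        refine ⟨S, ?_, fun k : S => lam' k, fun k => ⟨fun h => ?_, fun h => ?_⟩, ?_⟩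
        · have hli := (linearIndependent_equiv
            (Equiv.subtypeEquivRight (fun k => hmemS k))).2 hind'
          have hfun : ((fun k : {k // lam' k ≠ 0} => (α (k : Fin e) : Fin d → ℝ)) ∘
              ⇑(Equiv.subtypeEquivRight (fun k => hmemS k)))
              = fun k : {x // x ∈ S} => (α (k : Fin e) : Fin d → ℝ) := by
            funext k
            rfl
          rwa [hfun] at hli
        · refine (hok (k : Fin e)).1 ?_
          have := hsign' (k : Fin e) (ne_of_gt h)
          nlinarith
        · refine (hok (k : Fin e)).2 ?_
          have := hsign' (k : Fin e) (ne_of_lt h)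
          nlinarith
        · rw [← hsum', Finset.sum_coe_sort S (fun k => lam' k • (α k : Fin d → ℝ))]
          exact Finset.sum_subset (Finset.subset_univ S) (fun k _ hk => by
            have h0 : lam' k = 0 := by
              by_contra h0
              exact hk ((hmemS k).2 h0)
            rw [h0, zero_smul])
      · rintro ⟨S, hS, c, hc, rfl⟩
        refine ⟨fun k => if h : k ∈ S then c ⟨k, h⟩ else 0, fun k => ⟨fun h => ?_, fun h => ?_⟩, ?_⟩
        · by_cases hk : k ∈ S
          · simp only [dif_pos hk] at h
            exact (hc ⟨k, hk⟩).1 h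
          · simp only [dif_neg hk] at h
            exact absurd h (lt_irrefl 0)
        · by_cases hk : k ∈ S
          · simp only [dif_pos hk] at h
            exact (hc ⟨k, hk⟩).2 h
          · simp only [dif_neg hk] at h
            exact absurd h (lt_irrefl 0)
        · have h2 : ∑ k : Fin e, (fun k' : Fin e =>
              (if h : k' ∈ S then c ⟨k', h⟩ else 0)) k • (α k : Fin d → ℝ)
              = ∑ k ∈ S, (fun k' : Fin e =>
              (if h : k' ∈ S then c ⟨k', h⟩ else 0)) k • (α k : Fin d → ℝ) :=
            (Finset.sum_subset (Finset.subset_univ S) (fun k _ hk => by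
              simp only [dif_neg hk, zero_smul])).symm
          rw [h2, ← Finset.sum_coe_sort S]
          refine Finset.sum_congr rfl fun k _ => ?_
          simp only [Subtype.coe_eta, dif_pos k.2]
    rw [hCeq]
    refine isClosed_iUnion_of_finite fun S => isClosed_iUnion_of_finite fun hS => ?_
    set L : (S → ℝ) →ₗ[ℝ] (Fin d → ℝ) :=
      { toFun := fun c => ∑ k : S, c k • (α (k : Fin e) : Fin d → ℝ)
        map_add' := by
          intro c1 c2
          rw [← Finset.sum_add_distrib]
          refine Finset.sum_congr rfl fun k _ => ?_
          rw [Pi.add_apply, add_smul]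
        map_smul' := by
          intro s c
          rw [RingHom.id_apply, Finset.smul_sum]
          refine Finset.sum_congr rfl fun k _ => ?_
          rw [Pi.smul_apply, smul_smul]
          rfl } with hL
    have hker : LinearMap.ker L = ⊥ := by
      rw [LinearMap.ker_eq_bot']
      intro c hc
      have := Fintype.linearIndependent_iff.1 hS c hc
      funext k
      exact this k
    have hembed := LinearMap.isClosedEmbedding_of_injective hker
    refine hembed.isClosedMap _ ?_
    have : {c : S → ℝ | ∀ k : S, (0 < c k → α.mulVec xs (k : Fin e) = n.2 k) ∧
        (c k < 0 → α.mulVec xs (k : Fin e) = n.1 k)}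
        = ⋂ k : S, ({c : S → ℝ | 0 < c k → α.mulVec xs (k : Fin e) = n.2 k} ∩
          {c : S → ℝ | c k < 0 → α.mulVec xs (k : Fin e) = n.1 k}) := by
      ext c
      simp only [Set.mem_iInter, Set.mem_setOf_eq, Set.mem_inter_iff]
    rw [this]
    refine isClosed_iInter fun k => IsClosed.inter ?_ ?_
    · by_cases hup : α.mulVec xs (k : Fin e) = n.2 k
      · have : {c : S → ℝ | 0 < c k → α.mulVec xs (k : Fin e) = n.2 k} = Set.univ := by
          ext c; simp [hup]
        rw [this]; exact isClosed_univ
      · have : {c : S → ℝ | 0 < c k → α.mulVec xs (k : Fin e) = n.2 k}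
            = (fun c : S → ℝ => c k) ⁻¹' Set.Iic 0 := by
          ext c
          simp only [Set.mem_setOf_eq, Set.mem_preimage, Set.mem_Iic]
          constructor
          · intro h
            by_contra h0
            push_neg at h0
            exact hup (h h0)
          · intro h h0
            exact absurd (lt_of_lt_of_le h0 h) (lt_irrefl _)
        rw [this]
        exact isClosed_Iic.preimage (continuous_apply k)
    · by_cases hlo : α.mulVec xs (k : Fin e) = n.1 k
      · have : {c : S → ℝ | c k < 0 → α.mulVec xs (k : Fin e) = n.1 k} = Set.univ := by
          ext c; simp [hlo]
        rw [this]; exact isClosed_univ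
      · have : {c : S → ℝ | c k < 0 → α.mulVec xs (k : Fin e) = n.1 k}
            = (fun c : S → ℝ => c k) ⁻¹' Set.Ici 0 := by
          ext c
          simp only [Set.mem_setOf_eq, Set.mem_preimage, Set.mem_Ici]
          constructor
          · intro h
            by_contra h0
            push_neg at h0
            exact hlo (h h0)
          · intro h h0
            exact absurd (lt_of_lt_of_le h0 h) (lt_irrefl _)
        rw [this]
        exact isClosed_Ici.preimage (continuous_apply k)
  have hrowmem : (α i : Fin d → ℝ) ∈ C := by
    by_contra hni
    obtain ⟨f, u, hfu, hui⟩ := geometric_hahn_banach_closed_point hCconv hCclosed hni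
    have hu0 : 0 < u := by
      have := hfu 0 hC0
      simpa using this
    have hfle : ∀ y ∈ C, f y ≤ 0 := by
      intro y hy
      by_contra hpos
      push_neg at hpos
      have hs : 0 < u / f y := div_pos hu0 hpos
      have := hfu _ (hCsmul _ hs y hy)
      rw [map_smul, smul_eq_mul, div_mul_cancel₀ _ (ne_of_gt hpos)] at this
      exact lt_irrefl u this
    set v : Fin d → ℝ := fun j => f (Pi.single j 1) with hv
    have hkey : ∀ k : Fin e, α.mulVec v k = f (α k) := by
      intro k
      have hrow : (α k : Fin d → ℝ) = ∑ j, α k j • (Pi.single j (1:ℝ) : Fin d → ℝ) := by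
        funext j'
        rw [Finset.sum_apply]
        rw [Finset.sum_eq_single j']
        · simp
        · intro b _ hb
          rw [Pi.smul_apply, Pi.single_eq_of_ne (Ne.symm hb) 1, smul_zero]
        · simp
      conv_rhs => rw [hrow]
      rw [map_sum]
      simp only [map_smul, smul_eq_mul]
      simp only [Matrix.mulVec, dotProduct, hv]
    have hup : ∀ k, α.mulVec xs k = n.2 k → f (α k) ≤ 0 := by
      intro k hk
      refine hfle _ ⟨Pi.single k 1, fun k' => ⟨fun h => ?_, fun h => ?_⟩, ?_⟩
      · rcases eq_or_ne k' k with rfl | hne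
        · exact hk
        · rw [Pi.single_eq_of_ne hne 1] at h
          exact absurd h (lt_irrefl _)
      · rcases eq_or_ne k' k with rfl | hne
        · rw [Pi.single_eq_same] at h
          linarith
        · rw [Pi.single_eq_of_ne hne 1] at h
          exact absurd h (lt_irrefl _)
      · exact (single_smul_rows α k).symm
    have hlo : ∀ k, α.mulVec xs k = n.1 k → 0 ≤ f (α k) := by
      intro k hk
      have h1 : f (-(α k : Fin d → ℝ)) ≤ 0 := by
        refine hfle _ ⟨-Pi.single k 1, fun k' => ⟨fun h => ?_, fun h => ?_⟩, ?_⟩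
        · rcases eq_or_ne k' k with rfl | hne
          · rw [Pi.neg_apply, Pi.single_eq_same] at h
            linarith
          · rw [Pi.neg_apply, Pi.single_eq_of_ne hne 1] at h
            simp at h
        · rcases eq_or_ne k' k with rfl | hne
          · exact hk
          · rw [Pi.neg_apply, Pi.single_eq_of_ne hne 1] at h
            simp at h
        · rw [← single_smul_rows α k, ← Finset.sum_neg_distrib]
          refine Finset.sum_congr rfl fun k' _ => ?_
          rw [Pi.neg_apply, neg_smul]
      rw [map_neg] at h1
      linarith
    have hval : ∀ (t : ℝ) (k : Fin e), α.mulVec (xs + t • v) k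
        = α.mulVec xs k + t * f (α k) := by
      intro t k
      rw [Matrix.mulVec_add, Matrix.mulVec_smul]
      simp [smul_eq_mul, hkey k]
    have hev : ∀ᶠ t in nhdsWithin (0:ℝ) (Set.Ioi 0), xs + t • v ∈ Q := by
      have hallk : ∀ k : Fin e, ∀ᶠ t in nhdsWithin (0:ℝ) (Set.Ioi 0),
          n.1 k ≤ α.mulVec xs k + t * f (α k) ∧
          α.mulVec xs k + t * f (α k) ≤ n.2 k := by
        intro k
        have hupk : ∀ᶠ t in nhdsWithin (0:ℝ) (Set.Ioi 0),
            α.mulVec xs k + t * f (α k) ≤ n.2 k := by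
          by_cases hk2 : α.mulVec xs k = n.2 k
          · filter_upwards [self_mem_nhdsWithin] with t ht
            have := hup k hk2
            have ht' : (0:ℝ) < t := ht
            nlinarith
          · have hlt : α.mulVec xs k < n.2 k := lt_of_le_of_ne (hxsQ k).2 hk2
            have hcont : Filter.Tendsto (fun t : ℝ => α.mulVec xs k + t * f (α k))
                (nhdsWithin (0:ℝ) (Set.Ioi 0)) (nhds (α.mulVec xs k)) := by
              have : Continuous fun t : ℝ => α.mulVec xs k + t * f (α k) :=
                continuous_const.add (continuous_id.mul continuous_const)
              have h0 := this.tendsto 0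
              simp only [zero_mul, add_zero] at h0
              exact h0.mono_left nhdsWithin_le_nhds
            exact (hcont.eventually_lt_const hlt).mono fun t ht => ht.le
        have hlok : ∀ᶠ t in nhdsWithin (0:ℝ) (Set.Ioi 0),
            n.1 k ≤ α.mulVec xs k + t * f (α k) := by
          by_cases hk1 : α.mulVec xs k = n.1 k
          · filter_upwards [self_mem_nhdsWithin] with t ht
            have := hlo k hk1
            have ht' : (0:ℝ) < t := ht
            nlinarith
          · have hlt : n.1 k < α.mulVec xs k := lt_of_le_of_ne (hxsQ k).1 (Ne.symm hk1)
            have hcont : Filter.Tendsto (fun t : ℝ => α.mulVec xs k + t * f (α k))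
                (nhdsWithin (0:ℝ) (Set.Ioi 0)) (nhds (α.mulVec xs k)) := by
              have : Continuous fun t : ℝ => α.mulVec xs k + t * f (α k) :=
                continuous_const.add (continuous_id.mul continuous_const)
              have h0 := this.tendsto 0
              simp only [zero_mul, add_zero] at h0
              exact h0.mono_left nhdsWithin_le_nhds
            exact (hcont.eventually_const_lt hlt).mono fun t ht => ht.le
        exact hlok.and hupk
      have := (Filter.eventually_all (ι := Fin e)).2 hallk
      refine this.mono fun t ht => ?_
      intro k
      rw [hval t k]
      exact ht k
    obtain ⟨t, htmem, ht0⟩ := (hev.and self_mem_nhdsWithin).exists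
    have hobj := isMaxOn_iff.1 hmax _ htmem
    rw [hval t i] at hobj
    have ht0' : (0:ℝ) < t := ht0
    have hfi : 0 < f (α i) := lt_trans hu0 hui
    nlinarith
  obtain ⟨lam, hok, hsum⟩ := hrowmem
  obtain ⟨lam', hsum', hsign', hind'⟩ := reduce (fun k => (α k : Fin d → ℝ)) lam
  have hok' : ∀ k, (0 < lam' k → α.mulVec xs k = n.2 k) ∧
      (lam' k < 0 → α.mulVec xs k = n.1 k) := by
    intro k
    constructor
    · intro h
      refine (hok k).1 ?_
      have := hsign' k (ne_of_gt h)
      nlinarith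
    · intro h
      refine (hok k).2 ?_
      have := hsign' k (ne_of_lt h)
      nlinarith
  have hvec : ∑ k, lam' k • (α k : Fin d → ℝ) = (α i : Fin d → ℝ) := by
    rw [hsum', ← hsum]
  have heqs : ∀ j, ∑ k, lam' k * α k j = α i j := by
    intro j
    have := congrFun hvec j
    rw [sum_smul_rows_apply α lam' j] at this
    exact this
  set S := Finset.univ.filter (lam' · ≠ 0) with hS
  have hmemS : ∀ k : Fin e, k ∈ S ↔ lam' k ≠ 0 := by
    intro k; simp [hS]
  have hmem : lam' ∈ Lambda α i := by
    refine ⟨S, ?_, ?_, heqs, ?_⟩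
    · have hcard : S.card = Fintype.card {k // lam' k ≠ 0} := by
        rw [Fintype.card_subtype]
      rw [hcard]
      have := hind'.fintype_card_le_finrank
      rwa [Module.finrank_fin_fun] at this
    · intro k hk
      by_contra h0
      exact hk ((hmemS k).2 h0)
    · intro l' hl'0 hl'
      have hvec' : ∑ k, l' k • (α k : Fin d → ℝ) = (α i : Fin d → ℝ) := by
        funext j
        rw [sum_smul_rows_apply α l' j]
        exact hl' j
      have hdiff : ∑ k : {k // lam' k ≠ 0},
          (l' (k : Fin e) - lam' (k : Fin e)) • (α (k : Fin e) : Fin d → ℝ) = 0 := by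
        have h1 : ∑ k : {k // lam' k ≠ 0},
            (l' (k : Fin e) - lam' (k : Fin e)) • (α (k : Fin e) : Fin d → ℝ)
            = ∑ k : Fin e, (l' k - lam' k) • (α k : Fin d → ℝ) := by
          rw [← Finset.sum_subtype S (fun k => hmemS k)
            (fun k => (l' k - lam' k) • (α k : Fin d → ℝ))]
          exact Finset.sum_subset (Finset.subset_univ S) (fun k _ hk => by
            have h2 : lam' k = 0 := by
              by_contra h0
              exact hk ((hmemS k).2 h0)
            rw [h2, hl'0 k hk, sub_zero, zero_smul])
        rw [h1]
        simp only [sub_smul, Finset.sum_sub_distrib, hvec, hvec', sub_self]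
      have hzero := Fintype.linearIndependent_iff.1 hind' _ hdiff
      funext k
      by_cases hk : lam' k ≠ 0
      · have := hzero ⟨k, hk⟩
        have h4 : l' k - lam' k = 0 := this
        linarith
      · push_neg at hk
        rw [hk]
        exact hl'0 k (fun hmem => (hmemS k).1 hmem hk)
  refine ⟨lam', hmem, xs, hQP hxsQ, ?_⟩
  have hcomb := mulVec_comb heqs xs
  rw [hcomb]
  refine Finset.sum_congr rfl fun k _ => ?_
  rcases lt_trichotomy (lam' k) 0 with h | h | h
  · rw [eHigh, if_neg (not_le.2 h), (hok' k).2 h]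
  · rw [h, zero_mul, zero_mul]
  · rw [eHigh, if_pos h.le, (hok' k).1 h]

end MaxLemma
section MinLemma

variable {e d : ℕ} {α : Matrix (Fin e) (Fin d) ℝ}

lemma neg_row_eq_iff (α : Matrix (Fin e) (Fin d) ℝ) (l : Fin e → ℝ) (i : Fin e) :
    (∀ j, ∑ k, l k * (-α) k j = (-α) i j) ↔ (∀ j, ∑ k, l k * α k j = α i j) := by
  refine forall_congr' fun j => ?_
  have h1 : ∑ k, l k * (-α) k j = -∑ k, l k * α k j := by
    rw [← Finset.sum_neg_distrib]
    refine Finset.sum_congr rfl fun k _ => ?_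
    rw [Matrix.neg_apply, mul_neg]
  rw [h1, Matrix.neg_apply]
  exact neg_inj

lemma Lambda_neg (α : Matrix (Fin e) (Fin d) ℝ) (i : Fin e) :
    Lambda (-α) i = Lambda α i := by
  ext l
  simp only [Lambda, Set.mem_setOf_eq]
  constructor
  · rintro ⟨S, h1, h2, h3, h4⟩
    exact ⟨S, h1, h2, (neg_row_eq_iff α l i).1 h3,
      fun l' h5 h6 => h4 l' h5 ((neg_row_eq_iff α l' i).2 h6)⟩
  · rintro ⟨S, h1, h2, h3, h4⟩
    exact ⟨S, h1, h2, (neg_row_eq_iff α l i).2 h3,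
      fun l' h5 h6 => h4 l' h5 ((neg_row_eq_iff α l' i).1 h6)⟩

lemma Nondeg_neg (hα : Nondeg α) : Nondeg (-α) := by
  constructor
  · intro k h
    apply hα.1 k
    have : (-α) k = -(α k) := rfl
    rw [this, neg_eq_zero] at h
    exact h
  · intro i j hij c h
    apply hα.2 i j hij c
    have h1 : (-α) i = -(α i) := rfl
    have h2 : (-α) j = -(α j) := rfl
    rw [h1, h2, smul_neg, neg_inj] at h
    exact h

lemma polySet_neg (α : Matrix (Fin e) (Fin d) ℝ) (n : CM e) :
    PolySet (-α) (fun k => -n.2 k, fun k => -n.1 k) = PolySet α n := by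
  ext x
  simp only [PolySet, Set.mem_setOf_eq]
  refine forall_congr' fun k => ?_
  rw [Matrix.neg_mulVec]
  simp only [Pi.neg_apply]
  constructor
  · intro h
    exact ⟨by linarith [h.2], by linarith [h.1]⟩
  · intro h
    exact ⟨by linarith [h.2], by linarith [h.1]⟩

lemma min_lemma (hd : 1 ≤ d) (hα : Nondeg α) (n : CM e) {x0 : Fin d → ℝ}
    (hx0 : x0 ∈ PolySet α n) (hb : Bornology.IsBounded (PolySet α n)) (i : Fin e) :
    ∃ l ∈ Lambda α i, ∃ x ∈ closure (PolySet α n),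
      ∑ k, l k * eLow (l k) n k = α.mulVec x i := by
  set n' : CM e := (fun k => -n.2 k, fun k => -n.1 k) with hn'
  have hset : PolySet (-α) n' = PolySet α n := polySet_neg α n
  have hx0' : x0 ∈ PolySet (-α) n' := by rw [hset]; exact hx0
  have hb' : Bornology.IsBounded (PolySet (-α) n') := by rw [hset]; exact hb
  obtain ⟨l, hl, x, hx, hval⟩ := max_lemma hd (Nondeg_neg hα) n' hx0' hb' i
  rw [Lambda_neg α i] at hl
  rw [hset] at hx
  refine ⟨l, hl, x, hx, ?_⟩
  have h1 : ∀ k, eHigh (l k) n' k = -(eLow (l k) n k) := by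
    intro k
    by_cases h : 0 ≤ l k
    · rw [eHigh, eLow, if_pos h, if_pos h]
    · rw [eHigh, eLow, if_neg h, if_neg h]
  have h2 : ∑ k, l k * eHigh (l k) n' k = -∑ k, l k * eLow (l k) n k := by
    rw [← Finset.sum_neg_distrib]
    refine Finset.sum_congr rfl fun k _ => ?_
    rw [h1 k, mul_neg]
  rw [h2, Matrix.neg_mulVec, Pi.neg_apply, neg_inj] at hval
  exact hval

end MinLemma
/-- analytic formulation of a standard conditioning problem. -/
theorem statement_6 {d e : ℕ} (hd : 1 ≤ d) (hde : d ≤ e)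
    (α : Matrix (Fin e) (Fin d) ℝ) (hα : Nondeg α)
    (ι : Type) [Fintype ι]
    (M : Set (Fin d → ℝ)) (hMb : Bornology.IsBounded M) (hMc : Convex ℝ M)
    (matom : ι → CM e) (hoptatom : ∀ ω, matom ω = Opt α (matom ω))
    (hsub : ∀ ω, PolySet α (matom ω) ⊆ M)
    (hdisj : ∀ ω ω' : ι, ω ≠ ω' → Disjoint (PolySet α (matom ω)) (PolySet α (matom ω')))
    (hcover : MeasureTheory.volume (M \ ⋃ ω, PolySet α (matom ω)) = 0)
    (F : (Fin d → ℝ) → (Fin d → ℝ)) (a : ℝ) (ha : 1 < a)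
    (Bv : ι → (Fin d → ℝ))
    (hF : ∀ ω, ∀ x ∈ PolySet α (matom ω), F x = a • x + Bv ω)
    (hFM : Set.MapsTo F M M)
    (q : ℕ) (Ak : Fin q → Set ι) (lk : Fin q → ι → Fin q)
    (mk : Fin q → CM e) :
    ((∀ (k : Fin q) (ω : ι),
        (PolySet α (mk k) ∩ PolySet α (matom ω)).Nonempty ↔ ω ∈ Ak k) ∧
     (∀ (k : Fin q) (ω : ι),
        (PolySet α (mk k) ∩ PolySet α (matom ω)).Nonempty →
        F '' (PolySet α (mk k) ∩ PolySet α (matom ω)) ⊆ PolySet α (mk (lk k ω))))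
    ↔
    ((∀ (k : Fin q) (ω : ι),
        (PolySet α (Opt α (interCM (mk k) (matom ω)))).Nonempty ↔ ω ∈ Ak k) ∧
     (∀ (k : Fin q) (ω : ι),
        (PolySet α (Opt α (interCM (mk k) (matom ω)))).Nonempty →
        cmSub (fun i => a * (Opt α (interCM (mk k) (matom ω))).1 i + α.mulVec (Bv ω) i,
               fun i => a * (Opt α (interCM (mk k) (matom ω))).2 i + α.mulVec (Bv ω) i)
              (mk (lk k ω)))) := by
  have key : ∀ (k : Fin q) (ω : ι), PolySet α (Opt α (interCM (mk k) (matom ω)))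
      = PolySet α (mk k) ∩ PolySet α (matom ω) := by
    intro k ω
    rw [polySet_Opt hd hα, polySet_interCM]
  have ha0 : (0:ℝ) < a := lt_trans one_pos ha
  have hmul : ∀ (ω : ι) (x : Fin d → ℝ) (i : Fin e),
      α.mulVec (a • x + Bv ω) i = a * α.mulVec x i + α.mulVec (Bv ω) i := by
    intro ω x i
    rw [Matrix.mulVec_add, Matrix.mulVec_smul]
    simp [smul_eq_mul]
  constructor
  · rintro ⟨h1, h2⟩
    refine ⟨fun k ω => by rw [key]; exact h1 k ω, ?_⟩
    intro k ω hne
    rw [key] at hne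
    obtain ⟨x0, hx0⟩ := hne
    have himg := h2 k ω ⟨x0, hx0⟩
    have hx0n : x0 ∈ PolySet α (interCM (mk k) (matom ω)) := by
      rw [polySet_interCM]; exact hx0
    have hbn : Bornology.IsBounded (PolySet α (interCM (mk k) (matom ω))) := by
      refine hMb.subset ?_
      intro x hx
      rw [polySet_interCM] at hx
      exact hsub ω hx.2
    have hclsub : ∀ i : Fin e, closure (PolySet α (interCM (mk k) (matom ω))) ⊆
        {z | (mk (lk k ω)).1 i ≤ a * α.mulVec z i + α.mulVec (Bv ω) i ∧
          a * α.mulVec z i + α.mulVec (Bv ω) i ≤ (mk (lk k ω)).2 i} := by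
      intro i
      refine closure_minimal ?_ ?_
      · intro z hz
        have hz' : z ∈ PolySet α (mk k) ∩ PolySet α (matom ω) := by
          rw [← polySet_interCM]; exact hz
        have hFz : F z ∈ PolySet α (mk (lk k ω)) := himg ⟨z, hz', rfl⟩
        have hFz' : F z = a • z + Bv ω := hF ω z hz'.2
        rw [hFz', ] at hFz
        have h5 := hFz i
        rw [hmul ω z i] at h5
        exact ⟨h5.1.le, h5.2.le⟩
      · have hcont : Continuous fun z : Fin d → ℝ =>
            a * α.mulVec z i + α.mulVec (Bv ω) i :=
          (continuous_const.mul (continuous_mulVec_apply α i)).add continuous_const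
        exact (isClosed_le continuous_const hcont).inter (isClosed_le hcont continuous_const)
    intro i
    constructor
    · obtain ⟨l, hl, x, hx, hval⟩ := min_lemma hd hα (interCM (mk k) (matom ω)) hx0n hbn i
      have hOle : α.mulVec x i ≤ (Opt α (interCM (mk k) (matom ω))).1 i :=
        le_csSup (((Lambda_finite α i).image _).bddAbove) ⟨l, hl, hval⟩
      have h6 := (hclsub i hx).1
      calc (mk (lk k ω)).1 i ≤ a * α.mulVec x i + α.mulVec (Bv ω) i := h6
        _ ≤ a * (Opt α (interCM (mk k) (matom ω))).1 i + α.mulVec (Bv ω) i := by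
          nlinarith
    · obtain ⟨l, hl, x, hx, hval⟩ := max_lemma hd hα (interCM (mk k) (matom ω)) hx0n hbn i
      have hOle : (Opt α (interCM (mk k) (matom ω))).2 i ≤ α.mulVec x i :=
        csInf_le (((Lambda_finite α i).image _).bddBelow) ⟨l, hl, hval⟩
      have h6 := (hclsub i hx).2
      calc a * (Opt α (interCM (mk k) (matom ω))).2 i + α.mulVec (Bv ω) i
          ≤ a * α.mulVec x i + α.mulVec (Bv ω) i := by nlinarith
        _ ≤ (mk (lk k ω)).2 i := h6
  · rintro ⟨h1, h2⟩
    refine ⟨fun k ω => by rw [← key]; exact h1 k ω, ?_⟩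
    intro k ω hne
    have hne' : (PolySet α (Opt α (interCM (mk k) (matom ω)))).Nonempty := by
      rw [key]; exact hne
    have hsubm := h2 k ω hne'
    rintro y ⟨x, hx, rfl⟩
    have hxO : x ∈ PolySet α (Opt α (interCM (mk k) (matom ω))) := by
      rw [key]; exact hx
    have hFx : F x = a • x + Bv ω := hF ω x hx.2
    intro i
    rw [hFx, hmul ω x i]
    have h3 := hsubm i
    have h4 := hxO i
    constructor
    · have := h3.1
      simp only at this
      nlinarith [h4.1]
    · have := h3.2
      simp only at this
      nlinarith [h4.2]
end
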